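/- arXiv:math/0612175 — 3 statements merged into one kernel-verified Lean document; each statement's English description precedes it below -/
import Mathlib

section
/- Let k be a field and let C, D be conilpotent (cocomplete) coassociative k-coalgebras without counit, and let f, g : C → D be coalgebra homomorphisms. Then the pair (f, g) admits an equalizer in the category of conilpotent k-coalgebras. -/
open TensorProduct LinearMap

structure ModB (k : Type) [CommRing k] where
  carrier : Type
  [ag : AddCommGroup carrier]
  [mo : Module k carrier]

attribute [instance] ModB.ag ModB.mo

variable (k : Type) [CommRing k]

/-- Iterated tensor power: `TP k C n` has `n+1` factors of `C`. -/
noncomputable def TP (C : Type) [AddCommGroup C] [Module k C] : ℕ → ModB k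
  | 0 => ⟨C⟩
  | n + 1 => ⟨C ⊗[k] (TP C n).carrier⟩

variable {k}
variable {C D : Type} [AddCommGroup C] [Module k C] [AddCommGroup D] [Module k D]

/-- `iterΔ Δ n` is the `n`-fold iterate `Δ^(n+1) : C → C^{⊗(n+1)}`. -/
noncomputable def iterΔ (Δ : C →ₗ[k] C ⊗[k] C) : ∀ n, C →ₗ[k] (TP k C n).carrier
  | 0 => LinearMap.id
  | n + 1 => (TensorProduct.map LinearMap.id (iterΔ Δ n)).comp Δ

/-- `n+1`-fold tensor power of a linear map. -/
noncomputable def powMap (f : C →ₗ[k] D) : ∀ n, (TP k C n).carrier →ₗ[k] (TP k D n).carrier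
  | 0 => f
  | n + 1 => TensorProduct.map f (powMap f n)

/-- Coassociativity. -/
def Coassoc (Δ : C →ₗ[k] C ⊗[k] C) : Prop :=
  (TensorProduct.assoc k C C C).toLinearMap ∘ₗ (TensorProduct.map Δ LinearMap.id) ∘ₗ Δ
    = (TensorProduct.map LinearMap.id Δ) ∘ₗ Δ

/-- A (non-counital) coalgebra, bundled. -/
structure NCCoalg (k : Type) [CommRing k] where
  carrier : Type
  [ag : AddCommGroup carrier]
  [mo : Module k carrier]
  Δ : carrier →ₗ[k] carrier ⊗[k] carrier
  coassoc : Coassoc Δ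

attribute [instance] NCCoalg.ag NCCoalg.mo

def IsCoalgHom (A B : NCCoalg k) (f : A.carrier →ₗ[k] B.carrier) : Prop :=
  B.Δ ∘ₗ f = (TensorProduct.map f f) ∘ₗ A.Δ

def Conilpotent (A : NCCoalg k) : Prop :=
  ∀ t : A.carrier, ∃ n, iterΔ A.Δ n t = 0

section MyAux

lemma myMapInj {k : Type} [Field k] {M N P Q : Type}
    [AddCommGroup M] [Module k M] [AddCommGroup N] [Module k N]
    [AddCommGroup P] [Module k P] [AddCommGroup Q] [Module k Q]
    (f : M →ₗ[k] P) (g : N →ₗ[k] Q)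
    (hf : Function.Injective f) (hg : Function.Injective g) :
    Function.Injective (TensorProduct.map f g) := by
  rw [← LinearMap.rTensor_comp_lTensor]
  exact (Module.Flat.rTensor_preserves_injective_linearMap f hf).comp
    (Module.Flat.lTensor_preserves_injective_linearMap g hg)

lemma myPowMapInj {k : Type} [Field k] {C D : Type}
    [AddCommGroup C] [Module k C] [AddCommGroup D] [Module k D]
    (f : C →ₗ[k] D) (hf : Function.Injective f) :
    ∀ n, Function.Injective (powMap f n)
  | 0 => hf
  | n + 1 => myMapInj f (powMap f n) hf (myPowMapInj f hf n)

lemma myIterHom {k : Type} [CommRing k] (A B : NCCoalg k)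
    (h : A.carrier →ₗ[k] B.carrier) (hh : IsCoalgHom A B h) :
    ∀ n, iterΔ B.Δ n ∘ₗ h = powMap h n ∘ₗ iterΔ A.Δ n
  | 0 => rfl
  | n + 1 => by
    show (TensorProduct.map LinearMap.id (iterΔ B.Δ n) ∘ₗ B.Δ) ∘ₗ h
      = TensorProduct.map h (powMap h n) ∘ₗ (TensorProduct.map LinearMap.id (iterΔ A.Δ n) ∘ₗ A.Δ)
    rw [comp_assoc, hh, ← comp_assoc, ← TensorProduct.map_comp, ← comp_assoc,
      ← TensorProduct.map_comp, id_comp, comp_id, myIterHom A B h hh n]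

end MyAux

/-- the category of conilpotent (cocomplete) non-counital `k`-coalgebras
admits equalizers: every pair of parallel coalgebra homomorphisms between conilpotent
coalgebras has an equalizer (stated via its universal property). -/
theorem equalizer_of_conilpotent_coalgebras (k : Type) [Field k]
    (C D : NCCoalg k) (hC : Conilpotent C) (hD : Conilpotent D)
    (f g : C.carrier →ₗ[k] D.carrier)
    (hf : IsCoalgHom C D f) (hg : IsCoalgHom C D g) :
    ∃ (E : NCCoalg k) (e : E.carrier →ₗ[k] C.carrier),
      Conilpotent E ∧ IsCoalgHom E C e ∧ f ∘ₗ e = g ∘ₗ e ∧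
      ∀ (B : NCCoalg k), Conilpotent B →
        ∀ h : B.carrier →ₗ[k] C.carrier, IsCoalgHom B C h → f ∘ₗ h = g ∘ₗ h →
          ∃! j : B.carrier →ₗ[k] E.carrier, IsCoalgHom B E j ∧ e ∘ₗ j = h := by
  classical
  set V : Set (Submodule k C.carrier) :=
    {p | ∃ B : NCCoalg k, ∃ h : B.carrier →ₗ[k] C.carrier,
      IsCoalgHom B C h ∧ f ∘ₗ h = g ∘ₗ h ∧ p = LinearMap.range h} with hV
  set E : Submodule k C.carrier := sSup V with hE
  set e : ↥E →ₗ[k] C.carrier := E.subtype with he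
  have einj : Function.Injective e := Subtype.val_injective
  set ι2 : (↥E ⊗[k] ↥E) →ₗ[k] (C.carrier ⊗[k] C.carrier) := TensorProduct.map e e with hι2
  have ι2inj : Function.Injective ι2 := myMapInj e e einj einj
  -- Δ maps E into the image of E ⊗ E
  have hmem : ∀ x : C.carrier, x ∈ E → C.Δ x ∈ LinearMap.range ι2 := by
    intro x hx
    have hle : E ≤ Submodule.comap C.Δ (LinearMap.range ι2) := by
      apply sSup_le
      rintro p ⟨B, h, hhom, hfg, rfl⟩
      have hrle : LinearMap.range h ≤ E := le_sSup ⟨B, h, hhom, hfg, rfl⟩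
      rintro x ⟨b, rfl⟩
      have h0 : ∀ c : B.carrier, h c ∈ E := fun c => hrle ⟨c, rfl⟩
      set h₀ : B.carrier →ₗ[k] ↥E := LinearMap.codRestrict E h h0 with hh₀
      have hcomp : h = e ∘ₗ h₀ := rfl
      have : C.Δ (h b) = ι2 (TensorProduct.map h₀ h₀ (B.Δ b)) := by
        have hmm := LinearMap.congr_fun hhom b
        simp only [LinearMap.comp_apply] at hmm
        have this2 : TensorProduct.map h h = ι2 ∘ₗ TensorProduct.map h₀ h₀ := by
          rw [hι2, ← TensorProduct.map_comp, ← hcomp]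
        rw [hmm, this2]; rfl
      exact ⟨TensorProduct.map h₀ h₀ (B.Δ b), this.symm⟩
    exact hle hx
  set ΔE : ↥E →ₗ[k] ↥E ⊗[k] ↥E :=
    (LinearEquiv.ofInjective ι2 ι2inj).symm.toLinearMap ∘ₗ
      LinearMap.codRestrict (LinearMap.range ι2) (C.Δ ∘ₗ e) (fun x => hmem _ x.2) with hΔE
  have hkey : ι2 ∘ₗ ΔE = C.Δ ∘ₗ e := by
    ext x
    show ι2 ((LinearEquiv.ofInjective ι2 ι2inj).symm ⟨C.Δ (e x), hmem _ x.2⟩) = C.Δ (e x)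
    have := (LinearEquiv.ofInjective ι2 ι2inj).apply_symm_apply ⟨C.Δ (e x), hmem _ x.2⟩
    have h2 : ∀ y : ↥E ⊗[k] ↥E,
        ((LinearEquiv.ofInjective ι2 ι2inj) y : C.carrier ⊗[k] C.carrier) = ι2 y :=
      fun y => rfl
    rw [← h2, this]
  -- coassociativity of ΔE
  have coassocE : Coassoc ΔE := by
    unfold Coassoc
    apply LinearMap.ext
    intro x
    apply myMapInj e ι2 einj ι2inj
    rw [← LinearMap.comp_apply, ← LinearMap.comp_apply]
    have lhs : TensorProduct.map e ι2 ∘ₗ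
        ((TensorProduct.assoc k ↥E ↥E ↥E).toLinearMap ∘ₗ (TensorProduct.map ΔE LinearMap.id) ∘ₗ ΔE)
        = (TensorProduct.assoc k C.carrier C.carrier C.carrier).toLinearMap ∘ₗ
          (TensorProduct.map C.Δ LinearMap.id) ∘ₗ C.Δ ∘ₗ e := by
      calc TensorProduct.map e ι2 ∘ₗ
          ((TensorProduct.assoc k ↥E ↥E ↥E).toLinearMap ∘ₗ (TensorProduct.map ΔE LinearMap.id) ∘ₗ ΔE)
          = ((TensorProduct.map e (TensorProduct.map e e)) ∘ₗ
              (TensorProduct.assoc k ↥E ↥E ↥E).toLinearMap) ∘ₗ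
              (TensorProduct.map ΔE LinearMap.id) ∘ₗ ΔE := by rw [hι2]; rfl
        _ = ((TensorProduct.assoc k C.carrier C.carrier C.carrier).toLinearMap ∘ₗ
              TensorProduct.map ι2 e) ∘ₗ (TensorProduct.map ΔE LinearMap.id) ∘ₗ ΔE := by
            rw [TensorProduct.map_map_comp_assoc_eq, hι2]
        _ = (TensorProduct.assoc k C.carrier C.carrier C.carrier).toLinearMap ∘ₗ
              (TensorProduct.map (ι2 ∘ₗ ΔE) (e ∘ₗ LinearMap.id)) ∘ₗ ΔE := by
            rw [TensorProduct.map_comp]; rfl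
        _ = (TensorProduct.assoc k C.carrier C.carrier C.carrier).toLinearMap ∘ₗ
              (TensorProduct.map (C.Δ ∘ₗ e) e) ∘ₗ ΔE := by rw [hkey, comp_id]
        _ = (TensorProduct.assoc k C.carrier C.carrier C.carrier).toLinearMap ∘ₗ
              (TensorProduct.map C.Δ LinearMap.id) ∘ₗ (TensorProduct.map e e) ∘ₗ ΔE := by
            rw [show TensorProduct.map (C.Δ ∘ₗ e) e
                = TensorProduct.map C.Δ LinearMap.id ∘ₗ TensorProduct.map e e from by
              rw [← TensorProduct.map_comp, id_comp]]; rfl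
        _ = (TensorProduct.assoc k C.carrier C.carrier C.carrier).toLinearMap ∘ₗ
              (TensorProduct.map C.Δ LinearMap.id) ∘ₗ C.Δ ∘ₗ e := by rw [← hι2, hkey]
    have rhs : TensorProduct.map e ι2 ∘ₗ ((TensorProduct.map LinearMap.id ΔE) ∘ₗ ΔE)
        = (TensorProduct.map LinearMap.id C.Δ) ∘ₗ C.Δ ∘ₗ e := by
      calc TensorProduct.map e ι2 ∘ₗ ((TensorProduct.map LinearMap.id ΔE) ∘ₗ ΔE)
          = (TensorProduct.map (e ∘ₗ LinearMap.id) (ι2 ∘ₗ ΔE)) ∘ₗ ΔE := by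
            rw [TensorProduct.map_comp]; rfl
        _ = (TensorProduct.map e (C.Δ ∘ₗ e)) ∘ₗ ΔE := by rw [hkey, comp_id]
        _ = (TensorProduct.map LinearMap.id C.Δ) ∘ₗ (TensorProduct.map e e) ∘ₗ ΔE := by
            rw [show TensorProduct.map e (C.Δ ∘ₗ e)
                = TensorProduct.map LinearMap.id C.Δ ∘ₗ TensorProduct.map e e from by
              rw [← TensorProduct.map_comp, id_comp]]; rfl
        _ = (TensorProduct.map LinearMap.id C.Δ) ∘ₗ C.Δ ∘ₗ e := by rw [← hι2, hkey]
    rw [lhs, rhs]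
    have hco := C.coassoc
    unfold Coassoc at hco
    show ((((TensorProduct.assoc k C.carrier C.carrier C.carrier).toLinearMap ∘ₗ
        TensorProduct.map C.Δ LinearMap.id ∘ₗ C.Δ) ∘ₗ e) x)
      = ((TensorProduct.map LinearMap.id C.Δ ∘ₗ C.Δ) ∘ₗ e) x
    rw [hco]
  set Ecoalg : NCCoalg k := ⟨↥E, ΔE, coassocE⟩ with hEcoalg
  have ehom : IsCoalgHom Ecoalg C e := hkey.symm
  refine ⟨Ecoalg, e, ?_, ehom, ?_, ?_⟩
  · -- conilpotent
    intro t
    obtain ⟨n, hn⟩ := hC (e t)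
    refine ⟨n, myPowMapInj e einj n ?_⟩
    have := LinearMap.congr_fun (myIterHom Ecoalg C e ehom n) t
    simp only [LinearMap.comp_apply] at this
    rw [← this, hn, map_zero]
  · -- f ∘ e = g ∘ e
    have hker : E ≤ LinearMap.ker (f - g) := by
      apply sSup_le
      rintro p ⟨B, h, hhom, hfg, rfl⟩
      rintro x ⟨b, rfl⟩
      have := LinearMap.congr_fun hfg b
      simp only [LinearMap.comp_apply] at this
      simp [LinearMap.mem_ker, this]
    apply LinearMap.ext
    intro x
    have := hker x.2
    rw [LinearMap.mem_ker, LinearMap.sub_apply, sub_eq_zero] at this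
    exact this
  · -- universal property
    intro B hB h hhom hfg
    have hle : LinearMap.range h ≤ E := le_sSup ⟨B, h, hhom, hfg, rfl⟩
    set j : B.carrier →ₗ[k] ↥E := LinearMap.codRestrict E h (fun b => hle ⟨b, rfl⟩) with hj
    have hej : e ∘ₗ j = h := rfl
    refine ⟨j, ⟨?_, hej⟩, ?_⟩
    · -- j is a coalgebra hom
      unfold IsCoalgHom
      apply LinearMap.ext
      intro b
      apply ι2inj
      rw [← LinearMap.comp_apply, ← LinearMap.comp_apply]
      have l1 : ι2 ∘ₗ (Ecoalg.Δ ∘ₗ j) = (TensorProduct.map h h) ∘ₗ B.Δ := by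
        show (ι2 ∘ₗ ΔE) ∘ₗ j = _
        rw [hkey, comp_assoc, hej, hhom]
      have l2 : ι2 ∘ₗ ((TensorProduct.map j j) ∘ₗ B.Δ) = (TensorProduct.map h h) ∘ₗ B.Δ := by
        rw [← comp_assoc, hι2, ← TensorProduct.map_comp, hej]
      rw [l1, l2]
    · rintro j' ⟨-, hej'⟩
      apply LinearMap.ext
      intro b
      apply einj
      have h1 := LinearMap.congr_fun hej' b
      have h2 := LinearMap.congr_fun hej b
      simp only [LinearMap.comp_apply] at h1 h2
      rw [h1, h2]
end

section
/- Let C be a (non-counital) k-coalgebra. For n ≥ 1, let F_n C = Ker(Δ^(n+1) : C → C^⊗(n+1)). Then the filtration {F_n C} is compatible with the comultiplication: Δ(F_n C) ⊆ Σ_{p+q=n, p,q≥1} F_p C ⊗ F_q C, viewed inside C ⊗ C. -/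
open TensorProduct LinearMap

variable (k : Type) [CommRing k]

variable {k}
variable {C D : Type} [AddCommGroup C] [Module k C] [AddCommGroup D] [Module k D]

section AuxField

variable {k : Type} [Field k]
variable {V W₁ W₂ M : Type} [AddCommGroup V] [Module k V]
  [AddCommGroup W₁] [Module k W₁] [AddCommGroup W₂] [Module k W₂]
  [AddCommGroup M] [Module k M]

theorem aux_factor (g : V →ₗ[k] W₁) (f : V →ₗ[k] W₂) (h : ker g ≤ ker f) :
    ∃ h' : W₁ →ₗ[k] W₂, f = h' ∘ₗ g := by
  obtain ⟨r, hr⟩ := ((ker g).liftQ g le_rfl).exists_leftInverse_of_injective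
    (Submodule.ker_liftQ_eq_bot' _ _ rfl)
  refine ⟨((ker g).liftQ f h) ∘ₗ r, LinearMap.ext fun v => ?_⟩
  have h1 : g v = (ker g).liftQ g le_rfl ((ker g).mkQ v) := rfl
  have h2 : r ((ker g).liftQ g le_rfl ((ker g).mkQ v)) = (ker g).mkQ v :=
    DFunLike.congr_fun hr _
  simp only [LinearMap.comp_apply, h1, h2, Submodule.liftQ_apply]
  rfl

theorem lTensor_zero_mono {g : V →ₗ[k] W₁} {f : V →ₗ[k] W₂} (h : ker g ≤ ker f)
    (z : M ⊗[k] V) (hz : g.lTensor M z = 0) : f.lTensor M z = 0 := by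
  obtain ⟨h', rfl⟩ := aux_factor g f h
  rw [LinearMap.lTensor_comp, LinearMap.comp_apply, hz, map_zero]

theorem rTensor_zero_mono {g : V →ₗ[k] W₁} {f : V →ₗ[k] W₂} (h : ker g ≤ ker f)
    (z : V ⊗[k] M) (hz : g.rTensor M z = 0) : f.rTensor M z = 0 := by
  obtain ⟨h', rfl⟩ := aux_factor g f h
  rw [LinearMap.rTensor_comp, LinearMap.comp_apply, hz, map_zero]

end AuxField
section AuxIter

variable {k : Type} [Field k] {C : Type} [AddCommGroup C] [Module k C]

/-- Applying `Δ` to the last tensor factor. -/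
noncomputable def lastΔ (Δ : C →ₗ[k] C ⊗[k] C) :
    ∀ m, (TP k C m).carrier →ₗ[k] (TP k C (m + 1)).carrier
  | 0 => Δ
  | m + 1 => TensorProduct.map LinearMap.id (lastΔ Δ m)

theorem iterΔ_succ_eq (Δ : C →ₗ[k] C ⊗[k] C) :
    ∀ m, iterΔ Δ (m + 1) = (lastΔ Δ m) ∘ₗ iterΔ Δ m
  | 0 => by
    show (TensorProduct.map LinearMap.id (iterΔ Δ 0)).comp Δ = _
    show (TensorProduct.map (LinearMap.id : C →ₗ[k] C) (LinearMap.id : C →ₗ[k] C)).comp Δ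
      = Δ ∘ₗ (LinearMap.id : C →ₗ[k] C)
    rw [TensorProduct.map_id]
    rfl
  | m + 1 => by
    show (TensorProduct.map LinearMap.id (iterΔ Δ (m + 1))).comp Δ
        = (TensorProduct.map LinearMap.id (lastΔ Δ m)) ∘ₗ
          ((TensorProduct.map LinearMap.id (iterΔ Δ m)) ∘ₗ Δ)
    rw [iterΔ_succ_eq Δ m, ← LinearMap.comp_assoc, ← TensorProduct.map_comp,
      LinearMap.id_comp]

theorem iterΔ_ker_mono (Δ : C →ₗ[k] C ⊗[k] C) {a b : ℕ} (hab : a ≤ b) :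
    ker (iterΔ Δ a) ≤ ker (iterΔ Δ b) := by
  induction b, hab using Nat.le_induction with
  | base => exact le_rfl
  | succ b hab ih =>
    intro x hx
    have hx' : iterΔ Δ b x = 0 := ih hx
    have : iterΔ Δ (b + 1) x = lastΔ Δ b (iterΔ Δ b x) := by
      rw [iterΔ_succ_eq]; rfl
    simp only [mem_ker, this, hx', map_zero]

theorem iter_vanish (Δ : C →ₗ[k] C ⊗[k] C) (hΔ : Coassoc Δ) :
    ∀ a b (x : C), iterΔ Δ (a + b + 1) x = 0 →
      TensorProduct.map (iterΔ Δ a) (iterΔ Δ b) (Δ x) = 0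
  | 0, b, x, h => by
    rw [Nat.zero_add] at h
    have h' : TensorProduct.map LinearMap.id (iterΔ Δ b) (Δ x) = 0 := h
    rw [show iterΔ Δ 0 = (LinearMap.id : C →ₗ[k] C) from rfl]
    exact h'
  | a + 1, b, x, h => by
    rw [show a + 1 + b + 1 = (a + b + 1) + 1 from by omega] at h
    have h' : (iterΔ Δ (a + b + 1)).lTensor C (Δ x) = 0 := h
    have hker : ker (iterΔ Δ (a + b + 1))
        ≤ ker ((TensorProduct.map (iterΔ Δ a) (iterΔ Δ b)) ∘ₗ Δ) := by
      intro y hy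
      simp only [mem_ker, LinearMap.comp_apply] at hy ⊢
      exact iter_vanish Δ hΔ a b y hy
    have h2 : ((TensorProduct.map (iterΔ Δ a) (iterΔ Δ b)) ∘ₗ Δ).lTensor C (Δ x) = 0 :=
      lTensor_zero_mono hker _ h'
    have hco := DFunLike.congr_fun hΔ x
    simp only [LinearMap.comp_apply, LinearEquiv.coe_coe] at hco
    set u := TensorProduct.map LinearMap.id Δ (Δ x) with hu
    have hmapΔ : TensorProduct.map Δ LinearMap.id (Δ x)
        = (TensorProduct.assoc k C C C).symm u := by
      rw [← hco, LinearEquiv.symm_apply_apply]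
    show TensorProduct.map ((TensorProduct.map LinearMap.id (iterΔ Δ a)) ∘ₗ Δ)
      (iterΔ Δ b) (Δ x) = 0
    have hsplit : TensorProduct.map ((TensorProduct.map LinearMap.id (iterΔ Δ a)) ∘ₗ Δ)
        (iterΔ Δ b)
        = (TensorProduct.map (TensorProduct.map LinearMap.id (iterΔ Δ a)) (iterΔ Δ b)) ∘ₗ
          (TensorProduct.map Δ LinearMap.id) := by
      rw [← TensorProduct.map_comp, LinearMap.comp_id]
    rw [hsplit, LinearMap.comp_apply, hmapΔ, TensorProduct.map_map_assoc_symm]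
    have h3 : TensorProduct.map LinearMap.id
        (TensorProduct.map (iterΔ Δ a) (iterΔ Δ b)) u = 0 := by
      have e : TensorProduct.map (LinearMap.id : C →ₗ[k] C)
          ((TensorProduct.map (iterΔ Δ a) (iterΔ Δ b)) ∘ₗ Δ)
          = (TensorProduct.map LinearMap.id (TensorProduct.map (iterΔ Δ a) (iterΔ Δ b))) ∘ₗ
            (TensorProduct.map LinearMap.id Δ) := by
        rw [← TensorProduct.map_comp, LinearMap.id_comp]
      have h2' : TensorProduct.map (LinearMap.id : C →ₗ[k] C)
          ((TensorProduct.map (iterΔ Δ a) (iterΔ Δ b)) ∘ₗ Δ) (Δ x) = 0 := h2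
      rw [e, LinearMap.comp_apply] at h2'
      exact h2'
    rw [h3, map_zero]

end AuxIter

section Chain

variable {k : Type} [Field k] {C : Type} [AddCommGroup C] [Module k C]

/-- A projection of the ambient space onto a subspace. -/
noncomputable def projOf (P : Submodule k C) : C →ₗ[k] C :=
  P.subtype ∘ₗ Submodule.linearProjOfIsCompl P (Classical.choose P.exists_isCompl)
    (Classical.choose_spec P.exists_isCompl)

theorem projOf_mem (P : Submodule k C) (c : C) : projOf P c ∈ P :=
  (Submodule.linearProjOfIsCompl P _ _ c).2

theorem projOf_id (P : Submodule k C) {v : C} (hv : v ∈ P) : projOf P v = v := by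
  show P.subtype (Submodule.projectionOnto P _ _ v) = v
  rw [show (v : C) = ((⟨v, hv⟩ : P) : C) from rfl,
    Submodule.projectionOnto_apply_left]
  rfl

/-- A compatible chain of projections onto the submodules `F m`. -/
noncomputable def chain (F : ℕ → Submodule k C) : ℕ → (C →ₗ[k] C)
  | 0 => projOf (F 0)
  | m + 1 => projOf (F (m + 1)) + (chain F m) ∘ₗ (LinearMap.id - projOf (F (m + 1)))

theorem chain_mem (F : ℕ → Submodule k C) (hmono : ∀ {a b : ℕ}, a ≤ b → F a ≤ F b) :
    ∀ m c, chain F m c ∈ F m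
  | 0, c => projOf_mem _ _
  | m + 1, c => by
    show projOf (F (m + 1)) c + chain F m (((LinearMap.id : C →ₗ[k] C) - projOf (F (m + 1))) c) ∈ F (m + 1)
    exact add_mem (projOf_mem _ _)
      (hmono (Nat.le_succ m) (chain_mem F hmono m _))

theorem chain_id (F : ℕ → Submodule k C) : ∀ m {v : C}, v ∈ F m → chain F m v = v
  | 0, v, hv => projOf_id _ hv
  | m + 1, v, hv => by
    show projOf (F (m + 1)) v + chain F m (((LinearMap.id : C →ₗ[k] C) - projOf (F (m + 1))) v) = v
    rw [LinearMap.sub_apply, LinearMap.id_apply, projOf_id _ hv, sub_self, map_zero, add_zero]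

theorem chain_comp (F : ℕ → Submodule k C) (hmono : ∀ {a b : ℕ}, a ≤ b → F a ≤ F b) :
    ∀ b a, a ≤ b → ∀ c, chain F a (chain F b c) = chain F a c
  | 0, a, hab, c => by
    have h0 : a = 0 := by omega
    subst h0
    exact chain_id F 0 (projOf_mem _ _)
  | b + 1, a, hab, c => by
    rcases Nat.eq_or_lt_of_le hab with h | h
    · subst h
      exact chain_id F _ (chain_mem F hmono _ _)
    · have ha : a ≤ b := by omega
      show chain F a ((projOf (F (b + 1))
        + (chain F b) ∘ₗ ((LinearMap.id : C →ₗ[k] C) - projOf (F (b + 1)))) c) = _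
      rw [LinearMap.add_apply, LinearMap.comp_apply, LinearMap.sub_apply, LinearMap.id_apply,
        map_add, chain_comp F hmono b a ha, map_sub]
      abel

/-- for a non-counital coalgebra `C`, the coradical-type filtration
`F_n C = Ker Δ^{(n+1)}` (here `iterΔ Δ n = Δ^{(n+1)}`) is compatible with the
comultiplication: `Δ(F_n C) ⊆ Σ_{p+q=n, p,q≥1} F_p C ⊗ F_q C` inside `C ⊗ C`. -/
theorem comul_filtration_compat (k : Type) [Field k]
    (C : Type) [AddCommGroup C] [Module k C]
    (Δ : C →ₗ[k] C ⊗[k] C) (hΔ : Coassoc Δ)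
    (F : ℕ → Submodule k C) (hF : ∀ n, F n = LinearMap.ker (iterΔ Δ n)) :
    ∀ n, 1 ≤ n → ∀ x ∈ F n,
      Δ x ∈ ⨆ (p : ℕ) (q : ℕ) (_ : p + q = n ∧ 1 ≤ p ∧ 1 ≤ q),
        LinearMap.range (TensorProduct.map (F p).subtype (F q).subtype) := by
  intro n hn x hx
  classical
  have hmono : ∀ {a b : ℕ}, a ≤ b → F a ≤ F b := by
    intro a b hab
    rw [hF a, hF b]
    exact iterΔ_ker_mono Δ hab
  set e : ℕ → (C →ₗ[k] C) := chain F with he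
  have hemem : ∀ m c, e m c ∈ F m := chain_mem F hmono
  have heid : ∀ m {v : C}, v ∈ F m → e m v = v := chain_id F
  have hecomp : ∀ {a b : ℕ}, a ≤ b → ∀ c, e a (e b c) = e a c :=
    fun {a b} hab c => chain_comp F hmono b a hab c
  have hecomp' : ∀ {a b : ℕ}, a ≤ b → ∀ c, e b (e a c) = e a c :=
    fun {a b} hab c => heid b (hmono hab (hemem a c))
  have hx' : iterΔ Δ n x = 0 := by rw [hF, LinearMap.mem_ker] at hx; exact hx
  have hΔx : (iterΔ Δ (n - 1)).lTensor C (Δ x) = 0 := by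
    have h1 : iterΔ Δ ((n - 1) + 1) x = 0 := by
      rw [show n - 1 + 1 = n from by omega]
      exact hx'
    exact h1
  have hkill : ∀ (f : C →ₗ[k] C), (∀ v ∈ F (n - 1), f v = 0) →
      f.lTensor C (Δ x) = 0 := by
    intro f hf
    refine lTensor_zero_mono ?_ _ hΔx
    intro v hv
    rw [LinearMap.mem_ker] at hv ⊢
    exact hf v (by rw [hF, LinearMap.mem_ker]; exact hv)
  have he0 : e 0 = 0 := by
    ext c
    rw [LinearMap.zero_apply]
    have h1 : e 0 c ∈ F 0 := hemem 0 c
    rw [hF 0, LinearMap.mem_ker] at h1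
    exact h1
  have hW : ((LinearMap.id : C →ₗ[k] C) - e (n - 1)).lTensor C (Δ x) = 0 := by
    refine hkill _ (fun v hv => ?_)
    rw [LinearMap.sub_apply, LinearMap.id_apply, heid _ hv, sub_self]
  have hadd : ∀ (s : Finset ℕ) (g : ℕ → (C →ₗ[k] C)) (z : C ⊗[k] C),
      (∑ q ∈ s, g q).lTensor C z = ∑ q ∈ s, (g q).lTensor C z := by
    intro s g z
    refine Finset.induction_on s (by simp) ?_
    intro a t ha ih
    rw [Finset.sum_insert ha, Finset.sum_insert ha, LinearMap.lTensor_add,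
      LinearMap.add_apply, ih]
  have hsum : Δ x = ∑ i ∈ Finset.range (n - 1), (e (i + 1) - e i).lTensor C (Δ x) := by
    have htel : (∑ i ∈ Finset.range (n - 1), (e (i + 1) - e i)) = e (n - 1) - e 0 :=
      Finset.sum_range_sub e (n - 1)
    have h2 : (∑ i ∈ Finset.range (n - 1), (e (i + 1) - e i)).lTensor C (Δ x) = Δ x := by
      rw [htel, he0, sub_zero]
      have h3 := hW
      rw [LinearMap.lTensor_sub, LinearMap.sub_apply, LinearMap.lTensor_id,
        LinearMap.id_apply, sub_eq_zero] at h3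
      exact h3.symm
    rw [hadd] at h2
    exact h2.symm
  rw [hsum]
  refine Submodule.sum_mem _ ?_
  intro i hi
  rw [Finset.mem_range] at hi
  set q := i + 1 with hq
  set p := n - q with hp
  have hq1 : 1 ≤ q := by omega
  have hqn : q ≤ n - 1 := by omega
  have hp1 : 1 ≤ p := by omega
  have hpq : p + q = n := by omega
  set w := (iterΔ Δ p).rTensor C (Δ x) with hw
  have hA : (iterΔ Δ i).lTensor _ w = 0 := by
    have h0 : iterΔ Δ (p + i + 1) x = 0 := by
      rw [show p + i + 1 = n from by omega]; exact hx'
    have h1 := iter_vanish Δ hΔ p i x h0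
    rw [← LinearMap.lTensor_comp_rTensor, LinearMap.comp_apply] at h1
    exact h1
  have hcommute : ∀ (g : C →ₗ[k] C),
      g.lTensor _ w = (iterΔ Δ p).rTensor C (g.lTensor C (Δ x)) := by
    intro g
    rw [hw, ← LinearMap.comp_apply, LinearMap.lTensor_comp_rTensor,
      ← LinearMap.rTensor_comp_lTensor, LinearMap.comp_apply]
  have hWw : ((LinearMap.id : C →ₗ[k] C) - e (n - 1)).lTensor _ w = 0 := by
    rw [hcommute, hW, map_zero]
  have h3 : (iterΔ Δ i ∘ₗ (e (n - 1) - e i)).lTensor _ w = 0 := by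
    have hEN : (iterΔ Δ i ∘ₗ e (n - 1)).lTensor _ w = 0 := by
      have hdecomp : iterΔ Δ i ∘ₗ e (n - 1)
          = iterΔ Δ i - iterΔ Δ i ∘ₗ ((LinearMap.id : C →ₗ[k] C) - e (n - 1)) := by
        rw [LinearMap.comp_sub, LinearMap.comp_id]
        abel
      rw [hdecomp, LinearMap.lTensor_sub, LinearMap.sub_apply, hA,
        LinearMap.lTensor_comp, LinearMap.comp_apply, hWw, map_zero, sub_zero]
    have hEI : (iterΔ Δ i ∘ₗ e i).lTensor _ w = 0 := by
      have hz : iterΔ Δ i ∘ₗ e i = 0 := by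
        ext c
        rw [LinearMap.comp_apply, LinearMap.zero_apply]
        have h1 : e i c ∈ F i := hemem i c
        rw [hF, LinearMap.mem_ker] at h1
        exact h1
      rw [hz, LinearMap.lTensor_zero, LinearMap.zero_apply]
    rw [LinearMap.comp_sub, LinearMap.lTensor_sub, LinearMap.sub_apply, hEN, hEI, sub_zero]
  have h5 : ((e (n - 1)) - e i).lTensor _ w = 0 := by
    refine lTensor_zero_mono ?_ _ h3
    intro c hc
    rw [LinearMap.mem_ker] at hc ⊢
    rw [LinearMap.comp_apply] at hc
    have hFm : (e (n - 1) - e i) c ∈ F i := by rw [hF, LinearMap.mem_ker]; exact hc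
    have h6 := heid i hFm
    rw [LinearMap.sub_apply, map_sub, hecomp (show i ≤ n - 1 from by omega) c,
      hecomp (le_refl i) c, sub_self] at h6
    rw [LinearMap.sub_apply]
    exact h6.symm
  have h6 : (e q - e i).lTensor _ w = 0 := by
    have hπσ : (e q - e i) ∘ₗ (e (n - 1) - e i) = e q - e i := by
      ext c
      simp only [LinearMap.comp_apply, LinearMap.sub_apply, map_sub]
      rw [hecomp (show q ≤ n - 1 from hqn) c, hecomp (show i ≤ n - 1 from by omega) c,
        hecomp' (show i ≤ q from by omega) c, hecomp (le_refl i) c]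
      abel
    rw [← hπσ, LinearMap.lTensor_comp, LinearMap.comp_apply, h5, map_zero]
  set y := (e q - e i).lTensor C (Δ x) with hy
  have h7 : (iterΔ Δ p).rTensor C y = 0 := by
    rw [hy, ← hcommute]
    exact h6
  have h8 : ((LinearMap.id : C →ₗ[k] C) - e p).rTensor C y = 0 := by
    refine rTensor_zero_mono ?_ _ h7
    intro v hv
    rw [LinearMap.mem_ker] at hv ⊢
    have hvF : v ∈ F p := by rw [hF, LinearMap.mem_ker]; exact hv
    rw [LinearMap.sub_apply, LinearMap.id_apply, heid p hvF, sub_self]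
  have h9 : y = (e p).rTensor C y := by
    rw [LinearMap.rTensor_sub, LinearMap.sub_apply, LinearMap.rTensor_id,
      LinearMap.id_apply, sub_eq_zero] at h8
    exact h8
  have hmemq : ∀ c, (e q - e i) c ∈ F q := by
    intro c
    rw [LinearMap.sub_apply]
    exact sub_mem (hemem q c) (hmono (show i ≤ q from by omega) (hemem i c))
  have hmemp : ∀ c, e p c ∈ F p := hemem p
  have hfact : (TensorProduct.map (e p) (e q - e i))
      = (TensorProduct.map (F p).subtype (F q).subtype) ∘ₗ
        (TensorProduct.map (LinearMap.codRestrict (F p) (e p) hmemp)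
          (LinearMap.codRestrict (F q) (e q - e i) hmemq)) := by
    rw [← TensorProduct.map_comp, LinearMap.subtype_comp_codRestrict,
      LinearMap.subtype_comp_codRestrict]
  have hyy : y = TensorProduct.map (e p) (e q - e i) (Δ x) := by
    rw [h9, hy, ← LinearMap.comp_apply, LinearMap.rTensor_comp_lTensor]
  refine Submodule.mem_iSup_of_mem p ?_
  refine Submodule.mem_iSup_of_mem q ?_
  refine Submodule.mem_iSup_of_mem ⟨hpq, hp1, hq1⟩ ?_
  rw [hyy, hfact]
  exact ⟨TensorProduct.map (LinearMap.codRestrict (F p) (e p) hmemp)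
    (LinearMap.codRestrict (F q) (e q - e i) hmemq) (Δ x), rfl⟩
end Chain
end

section
/- Let k be a field, C a (non-counital) k-coalgebra with comultiplication Δ, and f, g : C → D coalgebra homomorphisms into a k-coalgebra D. Define E = ⋂_{p,q≥0} Ker((1^⊗p ⊗ (f−g) ⊗ 1^⊗q) ∘ Δ^(p+1+q)), where Δ^(m) is the iterated comultiplication (with Δ^(1) = id). Then Δ(E) ⊆ E ⊗ C and Δ(E) ⊆ C ⊗ E; in particular Δ(E) ⊆ (E ⊗ C) ∩ (C ⊗ E) = E ⊗ E, so E is a subcoalgebra of C. -/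
open TensorProduct LinearMap

variable (k : Type) [CommRing k]

variable {k}
variable {C D : Type} [AddCommGroup C] [Module k C] [AddCommGroup D] [Module k D]

/-- Cast between tensor powers of equal length. -/
noncomputable def TPcast {m n : ℕ} (h : m = n) :
    (TP k C m).carrier ≃ₗ[k] (TP k C n).carrier := by
  subst h; exact LinearEquiv.refl k _

variable (k C) in
/-- `Tail M q` is `M ⊗ C^{⊗q}` (right-nested). -/
noncomputable def Tail (M : Type) [AddCommGroup M] [Module k M] : ℕ → ModB k
  | 0 => ⟨M⟩
  | q + 1 => ⟨M ⊗[k] (TP k C q).carrier⟩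

/-- `φ ⊗ 1^{⊗q} : C^{⊗(q+1)} → M ⊗ C^{⊗q}`, applying `φ` to the first factor. -/
noncomputable def tailMap {M : Type} [AddCommGroup M] [Module k M] (φ : C →ₗ[k] M) :
    ∀ q, (TP k C q).carrier →ₗ[k] (Tail k C M q).carrier
  | 0 => φ
  | q + 1 =>
    (TensorProduct.map φ LinearMap.id
      : (C ⊗[k] (TP k C q).carrier) →ₗ[k] (M ⊗[k] (TP k C q).carrier))

variable (k C) in
/-- `Mix M p q` is `C^{⊗p} ⊗ M ⊗ C^{⊗q}` (right-nested). -/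
noncomputable def Mix (M : Type) [AddCommGroup M] [Module k M] : ℕ → ℕ → ModB k
  | 0, q => Tail k C M q
  | p + 1, q => ⟨C ⊗[k] (Mix M p q).carrier⟩

/-- `1^{⊗p} ⊗ φ ⊗ 1^{⊗q} : C^{⊗(p+1+q)} → C^{⊗p} ⊗ M ⊗ C^{⊗q}`
(the domain has `p+q+1` factors, i.e. is `TP k C (p+q)`). -/
noncomputable def sandwich {M : Type} [AddCommGroup M] [Module k M] (φ : C →ₗ[k] M) :
    ∀ p q, (TP k C (p + q)).carrier →ₗ[k] (Mix k C M p q).carrier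
  | 0, q => (tailMap φ q) ∘ₗ (TPcast (by omega : 0 + q = q)).toLinearMap
  | p + 1, q =>
    (TensorProduct.map LinearMap.id (sandwich φ p q)
        : (C ⊗[k] (TP k C (p + q)).carrier) →ₗ[k] (C ⊗[k] (Mix k C M p q).carrier)) ∘ₗ
      (TPcast (by omega : (p + 1) + q = (p + q) + 1)).toLinearMap

section AuxDev

variable {k : Type} [CommRing k] {C : Type} [AddCommGroup C] [Module k C]

lemma TPcast_comp_iterΔ (Δ : C →ₗ[k] C ⊗[k] C) {m n : ℕ} (h : m = n) :
    (TPcast h).toLinearMap ∘ₗ iterΔ Δ m = iterΔ Δ n := by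
  subst h; rfl

lemma map_map_apply {A B A' B' A'' B'' : Type}
    [AddCommGroup A] [Module k A] [AddCommGroup B] [Module k B]
    [AddCommGroup A'] [Module k A'] [AddCommGroup B'] [Module k B']
    [AddCommGroup A''] [Module k A''] [AddCommGroup B''] [Module k B'']
    (f : A' →ₗ[k] A'') (g : B' →ₗ[k] B'') (f' : A →ₗ[k] A') (g' : B →ₗ[k] B')
    (t : A ⊗[k] B) :
    TensorProduct.map f g (TensorProduct.map f' g' t)
      = TensorProduct.map (f ∘ₗ f') (g ∘ₗ g') t := by
  rw [TensorProduct.map_comp]; rfl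

lemma coassoc_apply (Δ : C →ₗ[k] C ⊗[k] C) (hC : Coassoc Δ) (x : C) :
    (TensorProduct.assoc k C C C) (TensorProduct.map Δ LinearMap.id (Δ x))
      = TensorProduct.map LinearMap.id Δ (Δ x) := by
  have h : (TensorProduct.assoc k C C C).toLinearMap ∘ₗ
      (TensorProduct.map Δ LinearMap.id) ∘ₗ Δ = (TensorProduct.map LinearMap.id Δ) ∘ₗ Δ := hC
  simpa using DFunLike.congr_fun h x

end AuxDev

section AuxDev2

variable {k : Type} [CommRing k] {C : Type} [AddCommGroup C] [Module k C]

/-- Reassociation appending a right factor: `C^{⊗(q+1)} ⊗ C ≃ C^{⊗(q+2)}`. -/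
noncomputable def Kap : ∀ q : ℕ, ((TP k C q).carrier ⊗[k] C) ≃ₗ[k] (TP k C (q+1)).carrier
  | 0 => LinearEquiv.refl k (C ⊗[k] C)
  | q + 1 =>
    (TensorProduct.assoc k C (TP k C q).carrier C) ≪≫ₗ
      TensorProduct.congr (LinearEquiv.refl k C) (Kap q)

lemma Kap_succ_apply (q : ℕ) (t : (C ⊗[k] (TP k C q).carrier) ⊗[k] C) :
    Kap (q+1) t = TensorProduct.map LinearMap.id (Kap q).toLinearMap
      ((TensorProduct.assoc k C (TP k C q).carrier C) t) := rfl

lemma iterΔ_succ (Δ : C →ₗ[k] C ⊗[k] C) (n : ℕ) :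
    iterΔ Δ (n+1) = (TensorProduct.map LinearMap.id (iterΔ Δ n)) ∘ₗ Δ := rfl

lemma Kap_iterΔ (Δ : C →ₗ[k] C ⊗[k] C) (hC : Coassoc Δ) :
    ∀ q, (Kap q).toLinearMap ∘ₗ
      (TensorProduct.map (iterΔ Δ q) LinearMap.id) ∘ₗ Δ = iterΔ Δ (q+1)
  | 0 => by
    apply LinearMap.ext; intro x
    simp [Kap, iterΔ, TensorProduct.map_id]
    rfl
  | q + 1 => by
    have IH := Kap_iterΔ Δ hC q
    apply LinearMap.ext; intro x
    simp only [LinearMap.comp_apply, LinearEquiv.coe_coe]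
    erw [Kap_succ_apply,
      show TensorProduct.map (iterΔ Δ (q+1)) (LinearMap.id : C →ₗ[k] C) (Δ x)
        = TensorProduct.map (TensorProduct.map LinearMap.id (iterΔ Δ q)) LinearMap.id
            (TensorProduct.map Δ LinearMap.id (Δ x)) from by
        rw [map_map_apply, LinearMap.id_comp, ← iterΔ_succ Δ q]
        rfl]
    rw [← TensorProduct.map_map_assoc, coassoc_apply Δ hC, map_map_apply, map_map_apply]
    simp only [LinearMap.id_comp, LinearMap.comp_assoc, IH]
    rfl

end AuxDev2

section AuxDev3

variable {k : Type} [CommRing k] {C : Type} [AddCommGroup C] [Module k C]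

lemma sandwich_succ_left {M : Type} [AddCommGroup M] [Module k M]
    (Δ : C →ₗ[k] C ⊗[k] C) (φ : C →ₗ[k] M) (p q : ℕ) :
    sandwich φ (p+1) q ∘ₗ iterΔ Δ ((p+1)+q)
      = TensorProduct.map LinearMap.id (sandwich φ p q ∘ₗ iterΔ Δ (p+q)) ∘ₗ Δ := by
  calc (sandwich φ (p+1) q ∘ₗ iterΔ Δ ((p+1)+q) : C →ₗ[k] C ⊗[k] (Mix k C M p q).carrier)
      = TensorProduct.map LinearMap.id (sandwich φ p q) ∘ₗ
          ((TPcast (by omega : (p+1)+q = (p+q)+1)).toLinearMap ∘ₗ iterΔ Δ ((p+1)+q)) := by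
        rfl
    _ = TensorProduct.map LinearMap.id (sandwich φ p q) ∘ₗ iterΔ Δ ((p+q)+1) := by
        exact congrArg (LinearMap.comp (TensorProduct.map LinearMap.id (sandwich φ p q)))
          (TPcast_comp_iterΔ Δ (by omega : (p+1)+q = (p+q)+1))
    _ = TensorProduct.map LinearMap.id (sandwich φ p q) ∘ₗ
          (TensorProduct.map LinearMap.id (iterΔ Δ (p+q)) ∘ₗ Δ) := by rw [iterΔ_succ]
    _ = TensorProduct.map LinearMap.id (sandwich φ p q ∘ₗ iterΔ Δ (p+q)) ∘ₗ Δ := by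
        rw [← LinearMap.comp_assoc, ← TensorProduct.map_comp, LinearMap.id_comp]

lemma sandwich_zero {M : Type} [AddCommGroup M] [Module k M]
    (Δ : C →ₗ[k] C ⊗[k] C) (φ : C →ₗ[k] M) (q : ℕ) :
    sandwich φ 0 q ∘ₗ iterΔ Δ (0+q) = tailMap φ q ∘ₗ iterΔ Δ q := by
  calc (sandwich φ 0 q ∘ₗ iterΔ Δ (0+q) : C →ₗ[k] (Tail k C M q).carrier)
      = tailMap φ q ∘ₗ ((TPcast (by omega : 0+q = q)).toLinearMap ∘ₗ iterΔ Δ (0+q)) := by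
        rw [← LinearMap.comp_assoc]; rfl
    _ = tailMap φ q ∘ₗ iterΔ Δ q := by rw [TPcast_comp_iterΔ]

/-- Reassociation `(C^{⊗p} ⊗ M ⊗ C^{⊗q}) ⊗ C ≃ C^{⊗p} ⊗ M ⊗ C^{⊗(q+1)}`. -/
noncomputable def Jmix (M : Type) [AddCommGroup M] [Module k M] :
    ∀ p q : ℕ, ((Mix k C M p q).carrier ⊗[k] C) ≃ₗ[k] (Mix k C M p (q+1)).carrier
  | 0, 0 => LinearEquiv.refl k (M ⊗[k] C)
  | 0, q+1 => (TensorProduct.assoc k M (TP k C q).carrier C) ≪≫ₗ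
      TensorProduct.congr (LinearEquiv.refl k M) (Kap q)
  | p+1, q => (TensorProduct.assoc k C (Mix k C M p q).carrier C) ≪≫ₗ
      TensorProduct.congr (LinearEquiv.refl k C) (Jmix M p q)

lemma Jmix_tail {M : Type} [AddCommGroup M] [Module k M]
    (Δ : C →ₗ[k] C ⊗[k] C) (hC : Coassoc Δ) (φ : C →ₗ[k] M) (q : ℕ) :
    (Jmix M 0 q).toLinearMap ∘ₗ
        TensorProduct.map (tailMap φ q ∘ₗ iterΔ Δ q) LinearMap.id ∘ₗ Δ
      = tailMap φ (q+1) ∘ₗ iterΔ Δ (q+1) := by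
  cases q with
  | zero =>
    apply LinearMap.ext; intro x
    calc ((Jmix M 0 0).toLinearMap ∘ₗ
          TensorProduct.map (tailMap φ 0 ∘ₗ iterΔ Δ 0) LinearMap.id ∘ₗ Δ : C →ₗ[k] M ⊗[k] C) x
        = TensorProduct.map φ LinearMap.id (Δ x) := rfl
      _ = TensorProduct.map φ LinearMap.id
            (TensorProduct.map LinearMap.id LinearMap.id (Δ x)) := by
          rw [TensorProduct.map_id]; rfl
      _ = (tailMap φ (0+1) ∘ₗ iterΔ Δ (0+1) : C →ₗ[k] M ⊗[k] C) x := rfl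
  | succ q =>
    apply LinearMap.ext; intro x
    have hK := DFunLike.congr_fun (Kap_iterΔ Δ hC (q+1)) x
    calc ((Jmix M 0 (q+1)).toLinearMap ∘ₗ
          TensorProduct.map (tailMap φ (q+1) ∘ₗ iterΔ Δ (q+1)) LinearMap.id ∘ₗ Δ : C →ₗ[k] M ⊗[k] (TP k C (q+1)).carrier) x
        = ((Jmix M 0 (q+1)).toLinearMap ∘ₗ LinearMap.id : _ →ₗ[k] M ⊗[k] (TP k C (q+1)).carrier)
            (TensorProduct.map (tailMap φ (q+1) ∘ₗ iterΔ Δ (q+1)) LinearMap.id (Δ x)) := rfl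
      _ = ((Jmix M 0 (q+1)).toLinearMap ∘ₗ LinearMap.id : _ →ₗ[k] M ⊗[k] (TP k C (q+1)).carrier)
            (TensorProduct.map (TensorProduct.map φ LinearMap.id) LinearMap.id
              (TensorProduct.map (iterΔ Δ (q+1)) LinearMap.id (Δ x))) := by
          rw [show TensorProduct.map (TensorProduct.map φ LinearMap.id) LinearMap.id
                (TensorProduct.map (iterΔ Δ (q+1)) LinearMap.id (Δ x))
              = TensorProduct.map (TensorProduct.map φ LinearMap.id ∘ₗ iterΔ Δ (q+1))
                  (LinearMap.id ∘ₗ LinearMap.id) (Δ x) from map_map_apply _ _ _ _ _,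
            LinearMap.id_comp]
          rfl
      _ = TensorProduct.map LinearMap.id (Kap q).toLinearMap
            ((TensorProduct.assoc k M (TP k C q).carrier C)
              (TensorProduct.map (TensorProduct.map φ LinearMap.id) LinearMap.id
                (TensorProduct.map (iterΔ Δ (q+1)) LinearMap.id (Δ x)))) := rfl
      _ = TensorProduct.map LinearMap.id (Kap q).toLinearMap
            (TensorProduct.map φ (TensorProduct.map LinearMap.id LinearMap.id)
              ((TensorProduct.assoc k C (TP k C q).carrier C)
                (TensorProduct.map (iterΔ Δ (q+1)) LinearMap.id (Δ x)))) := by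
          exact congrArg (TensorProduct.map LinearMap.id (Kap q).toLinearMap)
            (TensorProduct.map_map_assoc φ (LinearMap.id : (TP k C q).carrier →ₗ[k] _)
              (LinearMap.id : C →ₗ[k] C) (TensorProduct.map (iterΔ Δ (q+1)) LinearMap.id (Δ x))).symm
      _ = TensorProduct.map φ LinearMap.id
            (TensorProduct.map LinearMap.id (Kap q).toLinearMap
              ((TensorProduct.assoc k C (TP k C q).carrier C)
                (TensorProduct.map (iterΔ Δ (q+1)) LinearMap.id (Δ x)))) := by
          simp only [map_map_apply, TensorProduct.map_id, LinearMap.id_comp,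
            LinearMap.comp_id]
      _ = TensorProduct.map φ LinearMap.id
            (((Kap (q+1)).toLinearMap ∘ₗ
              TensorProduct.map (iterΔ Δ (q+1)) LinearMap.id ∘ₗ Δ) x) := rfl
      _ = TensorProduct.map φ LinearMap.id (iterΔ Δ (q+1+1) x) := by
          exact congrArg (TensorProduct.map φ LinearMap.id) hK
      _ = (tailMap φ (q+1+1) ∘ₗ iterΔ Δ (q+1+1) : C →ₗ[k] M ⊗[k] (TP k C (q+1)).carrier) x := rfl

lemma Jmix_sandwich {M : Type} [AddCommGroup M] [Module k M]
    (Δ : C →ₗ[k] C ⊗[k] C) (hC : Coassoc Δ) (φ : C →ₗ[k] M) :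
    ∀ p q : ℕ, (Jmix M p q).toLinearMap ∘ₗ
        TensorProduct.map (sandwich φ p q ∘ₗ iterΔ Δ (p+q)) LinearMap.id ∘ₗ Δ
      = sandwich φ p (q+1) ∘ₗ iterΔ Δ (p+(q+1))
  | 0, q => by
    rw [sandwich_zero Δ φ q, sandwich_zero Δ φ (q+1)]
    exact Jmix_tail Δ hC φ q
  | p+1, q => by
    have IH := Jmix_sandwich Δ hC φ p q
    rw [sandwich_succ_left Δ φ p (q+1), sandwich_succ_left Δ φ p q]
    apply LinearMap.ext; intro x
    calc ((Jmix M (p+1) q).toLinearMap ∘ₗ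
          TensorProduct.map
            (TensorProduct.map LinearMap.id (sandwich φ p q ∘ₗ iterΔ Δ (p+q)) ∘ₗ Δ)
            LinearMap.id ∘ₗ Δ : C →ₗ[k] C ⊗[k] (Mix k C M p (q+1)).carrier) x
        = ((Jmix M (p+1) q).toLinearMap ∘ₗ LinearMap.id : _ →ₗ[k] C ⊗[k] (Mix k C M p (q+1)).carrier)
            (TensorProduct.map
              (TensorProduct.map LinearMap.id (sandwich φ p q ∘ₗ iterΔ Δ (p+q)) ∘ₗ Δ)
              LinearMap.id (Δ x)) := rfl
      _ = ((Jmix M (p+1) q).toLinearMap ∘ₗ LinearMap.id : _ →ₗ[k] C ⊗[k] (Mix k C M p (q+1)).carrier)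
            (TensorProduct.map
              (TensorProduct.map LinearMap.id (sandwich φ p q ∘ₗ iterΔ Δ (p+q)))
              LinearMap.id (TensorProduct.map Δ LinearMap.id (Δ x))) := by
          rw [map_map_apply, LinearMap.id_comp]
      _ = TensorProduct.map LinearMap.id (Jmix M p q).toLinearMap
            ((TensorProduct.assoc k C (Mix k C M p q).carrier C)
              (TensorProduct.map
                (TensorProduct.map LinearMap.id (sandwich φ p q ∘ₗ iterΔ Δ (p+q)))
                LinearMap.id (TensorProduct.map Δ LinearMap.id (Δ x)))) := rfl
      _ = TensorProduct.map LinearMap.id (Jmix M p q).toLinearMap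
            (TensorProduct.map LinearMap.id
              (TensorProduct.map (sandwich φ p q ∘ₗ iterΔ Δ (p+q)) LinearMap.id)
              ((TensorProduct.assoc k C C C)
                (TensorProduct.map Δ LinearMap.id (Δ x)))) := by
          rw [← TensorProduct.map_map_assoc]
      _ = TensorProduct.map LinearMap.id (Jmix M p q).toLinearMap
            (TensorProduct.map LinearMap.id
              (TensorProduct.map (sandwich φ p q ∘ₗ iterΔ Δ (p+q)) LinearMap.id)
              (TensorProduct.map LinearMap.id Δ (Δ x))) := by
          rw [coassoc_apply Δ hC]
      _ = TensorProduct.map LinearMap.id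
            ((Jmix M p q).toLinearMap ∘ₗ
              TensorProduct.map (sandwich φ p q ∘ₗ iterΔ Δ (p+q)) LinearMap.id ∘ₗ Δ)
            (Δ x) := by
          simp only [map_map_apply, LinearMap.id_comp]
      _ = TensorProduct.map LinearMap.id
            (sandwich φ p (q+1) ∘ₗ iterΔ Δ (p+(q+1))) (Δ x) := by rw [IH]
      _ = (TensorProduct.map LinearMap.id
            (sandwich φ p (q+1) ∘ₗ iterΔ Δ (p+(q+1))) ∘ₗ Δ) x := rfl

end AuxDev3


section Decomp

variable {k : Type} [CommRing k] {C : Type} [AddCommGroup C] [Module k C]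
variable {ι : Type} [DecidableEq ι] (b : Module.Basis ι k C)

/-- Expand the left factor of `C ⊗ N` in the basis `b`. -/
noncomputable def eLb (N : Type) [AddCommGroup N] [Module k N] :
    (C ⊗[k] N) ≃ₗ[k] (ι →₀ N) :=
  (TensorProduct.congr b.repr (LinearEquiv.refl k N)) ≪≫ₗ
    TensorProduct.finsuppScalarLeft k N ι

/-- Expand the right factor of `N ⊗ C` in the basis `b`. -/
noncomputable def eRb (N : Type) [AddCommGroup N] [Module k N] :
    (N ⊗[k] C) ≃ₗ[k] (ι →₀ N) :=
  (TensorProduct.congr (LinearEquiv.refl k N) b.repr) ≪≫ₗ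
    TensorProduct.finsuppScalarRight k k N ι

lemma eLb_apply (N : Type) [AddCommGroup N] [Module k N] (x : C) (n : N) (i : ι) :
    eLb b N (x ⊗ₜ[k] n) i = b.repr x i • n := by
  simp [eLb]

lemma eRb_apply (N : Type) [AddCommGroup N] [Module k N] (x : C) (n : N) (i : ι) :
    eRb b N (n ⊗ₜ[k] x) i = b.repr x i • n := by
  simp [eRb]

lemma eLb_symm_single (N : Type) [AddCommGroup N] [Module k N] (i : ι) (n : N) :
    (eLb b N).symm (Finsupp.single i n) = b i ⊗ₜ[k] n := by
  rw [LinearEquiv.symm_apply_eq]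
  ext j
  rw [eLb_apply]
  simp [Finsupp.single_apply, Module.Basis.repr_self, eq_comm]

lemma eRb_symm_single (N : Type) [AddCommGroup N] [Module k N] (i : ι) (n : N) :
    (eRb b N).symm (Finsupp.single i n) = n ⊗ₜ[k] b i := by
  rw [LinearEquiv.symm_apply_eq]
  ext j
  rw [eRb_apply]
  simp [Finsupp.single_apply, Module.Basis.repr_self, eq_comm]

lemma eLb_lTensor {N N' : Type} [AddCommGroup N] [Module k N]
    [AddCommGroup N'] [Module k N'] (S : N →ₗ[k] N') (t : C ⊗[k] N) :
    eLb b N' (TensorProduct.map LinearMap.id S t) = Finsupp.mapRange.linearMap S (eLb b N t) := by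
  induction t using TensorProduct.induction_on with
  | zero => simp
  | tmul x n =>
    ext j
    simp [eLb_apply]
  | add u v hu hv => simp [map_add, hu, hv]

lemma eRb_rTensor {N N' : Type} [AddCommGroup N] [Module k N]
    [AddCommGroup N'] [Module k N'] (S : N →ₗ[k] N') (t : N ⊗[k] C) :
    eRb b N' (TensorProduct.map S LinearMap.id t) = Finsupp.mapRange.linearMap S (eRb b N t) := by
  induction t using TensorProduct.induction_on with
  | zero => simp
  | tmul n x =>
    ext j
    simp [eRb_apply]
  | add u v hu hv => simp [map_add, hu, hv]

lemma eLb_reconstruct (N : Type) [AddCommGroup N] [Module k N] (t : C ⊗[k] N) :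
    t = (eLb b N t).sum (fun i n => b i ⊗ₜ[k] n) := by
  conv_lhs => rw [← (eLb b N).symm_apply_apply t, ← Finsupp.sum_single (eLb b N t)]
  rw [map_finsuppSum]
  exact Finsupp.sum_congr (fun i _ => eLb_symm_single b N i _)

lemma eRb_reconstruct (N : Type) [AddCommGroup N] [Module k N] (t : N ⊗[k] C) :
    t = (eRb b N t).sum (fun i n => n ⊗ₜ[k] b i) := by
  conv_lhs => rw [← (eRb b N).symm_apply_apply t, ← Finsupp.sum_single (eRb b N t)]
  rw [map_finsuppSum]
  exact Finsupp.sum_congr (fun i _ => eRb_symm_single b N i _)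

end Decomp

/-- for coalgebra homomorphisms `f, g : C → D`, the subspace
`E = ⋂_{p,q≥0} Ker((1^{⊗p} ⊗ (f−g) ⊗ 1^{⊗q}) ∘ Δ^{(p+1+q)})` satisfies
`Δ(E) ⊆ E ⊗ C`, `Δ(E) ⊆ C ⊗ E` and `Δ(E) ⊆ E ⊗ E`; in particular `E` is a
subcoalgebra of `C`.  (Here `iterΔ Δ (p+q) = Δ^{(p+q+1)}`.) -/
theorem equalizer_subspace_is_subcoalgebra (k : Type) [Field k]
    (C D : Type) [AddCommGroup C] [Module k C] [AddCommGroup D] [Module k D]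
    (ΔC : C →ₗ[k] C ⊗[k] C) (ΔD : D →ₗ[k] D ⊗[k] D)
    (hC : Coassoc ΔC) (hD : Coassoc ΔD)
    (f g : C →ₗ[k] D)
    (hf : ΔD ∘ₗ f = (TensorProduct.map f f) ∘ₗ ΔC)
    (hg : ΔD ∘ₗ g = (TensorProduct.map g g) ∘ₗ ΔC)
    (E : Submodule k C)
    (hE : E = ⨅ (p : ℕ) (q : ℕ),
      LinearMap.ker ((sandwich (f - g) p q) ∘ₗ iterΔ ΔC (p + q))) :
    ∀ x ∈ E,
      ΔC x ∈ LinearMap.range (TensorProduct.map E.subtype (LinearMap.id : C →ₗ[k] C)) ∧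
      ΔC x ∈ LinearMap.range (TensorProduct.map (LinearMap.id : C →ₗ[k] C) E.subtype) ∧
      ΔC x ∈ LinearMap.range (TensorProduct.map E.subtype E.subtype) := by
  classical
  intro x hx
  rw [hE] at hx
  have hxk : ∀ p q : ℕ, sandwich (f - g) p q (iterΔ ΔC (p + q) x) = 0 := by
    intro p q
    have h2 := (Submodule.mem_iInf _).mp ((Submodule.mem_iInf _).mp hx p) q
    simpa using h2
  have hmem : ∀ y : C, (∀ p q : ℕ, sandwich (f - g) p q (iterΔ ΔC (p + q) y) = 0) → y ∈ E := by
    intro y hy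
    rw [hE]
    exact (Submodule.mem_iInf _).mpr fun p => (Submodule.mem_iInf _).mpr fun q => by
      simpa using hy p q
  obtain ⟨sE, hsub, hspan, hind⟩ := exists_linearIndependent k (E : Set C)
  have hspanE : Submodule.span k sE = E := by rw [hspan, Submodule.span_eq]
  let b : Module.Basis (LinearIndepOn.extend (show LinearIndepOn k _root_.id sE from hind) (Set.subset_univ sE)) k C := Module.Basis.extend hind
  set W := eLb b C (ΔC x) with hWdef
  set V := eRb b C (ΔC x) with hVdef
  have recL : ΔC x = W.sum fun i n => b i ⊗ₜ[k] n := by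
    rw [hWdef]; exact eLb_reconstruct b C (ΔC x)
  have recR : ΔC x = V.sum fun i n => n ⊗ₜ[k] b i := by
    rw [hVdef]; exact eRb_reconstruct b C (ΔC x)
  have hWE : ∀ i, W i ∈ E := by
    intro i
    apply hmem
    intro p q
    have h0 := hxk (p+1) q
    have hL : sandwich (f - g) (p+1) q (iterΔ ΔC ((p+1) + q) x)
        = TensorProduct.map LinearMap.id
            (sandwich (f - g) p q ∘ₗ iterΔ ΔC (p + q)) (ΔC x) :=
      DFunLike.congr_fun (sandwich_succ_left ΔC (f - g) p q) x
    have h1 : TensorProduct.map LinearMap.id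
        (sandwich (f - g) p q ∘ₗ iterΔ ΔC (p + q)) (ΔC x) = 0 := by
      rw [← hL]; exact h0
    have h2 := eLb_lTensor b (sandwich (f - g) p q ∘ₗ iterΔ ΔC (p + q)) (ΔC x)
    rw [h1, ← hWdef] at h2
    have h3 := DFunLike.congr_fun h2.symm i
    simpa using h3
  have hVE : ∀ i, V i ∈ E := by
    intro i
    apply hmem
    intro p q
    have h0 := hxk p (q + 1)
    have hL : (Jmix D p q) (TensorProduct.map
          (sandwich (f - g) p q ∘ₗ iterΔ ΔC (p + q)) LinearMap.id (ΔC x))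
        = sandwich (f - g) p (q+1) (iterΔ ΔC (p + (q+1)) x) :=
      DFunLike.congr_fun (Jmix_sandwich ΔC hC (f - g) p q) x
    have h1 : TensorProduct.map
        (sandwich (f - g) p q ∘ₗ iterΔ ΔC (p + q)) LinearMap.id (ΔC x) = 0 := by
      apply (Jmix D p q).injective
      rw [map_zero, hL]
      exact h0
    have h2 := eRb_rTensor b (sandwich (f - g) p q ∘ₗ iterΔ ΔC (p + q)) (ΔC x)
    rw [h1, ← hVdef] at h2
    have h3 := DFunLike.congr_fun h2.symm i
    simpa using h3
  have hiS : ∀ i, W i ≠ 0 → (b i) ∈ E := by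
    intro i hWi
    by_contra hbi
    apply hWi
    have hiSset : (↑i : C) ∉ sE := by
      intro h
      exact hbi (by
        rw [← hspanE]
        exact Submodule.subset_span (by erw [Module.Basis.extend_apply_self]; assumption))
    have hcoef : ∀ j, b.repr (V j) i = 0 := by
      intro j
      have hVj : V j ∈ Submodule.span k (b '' ((↑) ⁻¹' sE)) := by
        have himg : b '' ((↑) ⁻¹' sE) = sE := by
          ext c
          constructor
          · rintro ⟨j', hj', rfl⟩
            erw [Module.Basis.extend_apply_self]; assumption
          · intro hc
            refine ⟨⟨c, LinearIndepOn.subset_extend (show LinearIndepOn k _root_.id sE from hind) _ hc⟩, ?_, Module.Basis.extend_apply_self _ _⟩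
            simpa [Module.Basis.extend_apply_self] using hc
        rw [himg, hspanE]
        exact hVE j
      have hsupp := (Module.Basis.mem_span_image b).mp hVj
      by_contra hne
      exact hiSset (hsupp (Finsupp.mem_support_iff.mpr hne))
    rw [hWdef]
    conv_lhs => rw [recR]
    rw [map_finsuppSum, Finsupp.sum_apply, Finsupp.sum]
    apply Finset.sum_eq_zero
    intro j hj
    rw [eLb_apply, hcoef j, zero_smul]
  refine ⟨?_, ?_, ?_⟩
  · rw [recR, Finsupp.sum]
    apply Submodule.sum_mem
    intro j hj
    exact LinearMap.mem_range.mpr ⟨(⟨V j, hVE j⟩ : E) ⊗ₜ[k] (b j), by simp⟩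
  · rw [recL, Finsupp.sum]
    apply Submodule.sum_mem
    intro i hi
    exact LinearMap.mem_range.mpr ⟨(b i) ⊗ₜ[k] (⟨W i, hWE i⟩ : E), by simp⟩
  · rw [recL, Finsupp.sum]
    apply Submodule.sum_mem
    intro i hi
    exact LinearMap.mem_range.mpr
      ⟨(⟨b i, hiS i (Finsupp.mem_support_iff.mp hi)⟩ : E) ⊗ₜ[k] (⟨W i, hWE i⟩ : E), by simp⟩
end
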